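/- The character randomized benchmarking signal under gate-dependent noise deviates from a single exponential by at most ε_m ≤ δ_1 δ_2^m, where δ_1 = |φ̂| · max_{Ĝ} |χ_φ̂(Ĝ)| · max_G ‖Δ_G‖_◇ and δ_2 = E_{G∈G} ‖Δ_G‖_◇. Concretely, ε_m = |φ̂| E_{Ĝ, G_1,...,G_m} χ_φ̂(Ĝ) ⟨⟨Q| Δ_{G_inv} Δ_{G_m} ⋯ Δ_{G_1 Ĝ} |ρ⟩⟩ satisfies |ε_m| ≤ δ_1 δ_2^m. -/

import Mathlib

open Matrix

/-- The character randomized benchmarking signal under gate-dependent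
noise deviates from a single exponential by
`ε_m = |φ̂| 𝔼_{ĥ,G_1,…,G_m} χ(ĥ) ⟨⟨Q| Δ(G_inv) Δ(G_m) ⋯ Δ(G_2) Δ(G_1 ĥ) |ρ⟩⟩`,
which satisfies `|ε_m| ≤ δ₁ δ₂^m` with
`δ₁ = |φ̂| ⋅ max_ĥ |χ(ĥ)| ⋅ max_g ‖Δ g‖_◇` and `δ₂ = 𝔼_g ‖Δ g‖_◇`.
Here `ν` is the diamond norm, assumed (as holds for it) submultiplicative, nonnegative
and dominating `|⟨⟨Q| ⋅ |ρ⟩⟩|`. -/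
theorem stmt_11 {n : ℕ} {G : Type*} [Group G] [Fintype G]
    (φ : G →* Matrix (Fin n) (Fin n) ℝ)
    (φt : G → Matrix (Fin n) (Fin n) ℝ)
    (L R : Matrix (Fin n) (Fin n) ℝ)
    (Δ : G → Matrix (Fin n) (Fin n) ℝ)
    (hΔ : ∀ g, Δ g = φt g - L * φ g * R)
    (H : Subgroup G) [Fintype H]
    (χ : H → ℝ) (d : ℕ)
    (ν : Matrix (Fin n) (Fin n) ℝ → ℝ)
    (hνsub : ∀ A B, ν (A * B) ≤ ν A * ν B)
    (hν0 : ∀ A, 0 ≤ ν A)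
    (Q ρ : Fin n → ℝ)
    (hνQ : ∀ A : Matrix (Fin n) (Fin n) ℝ, |Q ⬝ᵥ A.mulVec ρ| ≤ ν A)
    (m : ℕ) :
    |(d : ℝ) * ((Fintype.card H : ℝ) * (Fintype.card G : ℝ) ^ m)⁻¹ *
        ∑ h : H, ∑ g : Fin m → G, χ h *
          (Q ⬝ᵥ ((Δ (((List.ofFn g).reverse.prod)⁻¹) *
            ((List.ofFn fun i : Fin m =>
              Δ (if (i : ℕ) = 0 then g i * (h : G) else g i)).reverse.prod)).mulVec ρ))| ≤
      ((d : ℝ) * (Finset.univ.sup' Finset.univ_nonempty fun h : H => |χ h|) *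
        (Finset.univ.sup' Finset.univ_nonempty fun g : G => ν (Δ g))) *
      ((Fintype.card G : ℝ)⁻¹ * ∑ g : G, ν (Δ g)) ^ m := by
  classical
  set M := Finset.univ.sup' Finset.univ_nonempty fun h : H => |χ h| with hMdef
  set N := Finset.univ.sup' Finset.univ_nonempty fun g : G => ν (Δ g) with hNdef
  set S := ∑ g : G, ν (Δ g) with hSdef
  have hM0 : (0:ℝ) ≤ M := le_trans (abs_nonneg (χ 1)) (Finset.le_sup' (fun h : H => |χ h|) (Finset.mem_univ (1 : H)))
  have hN0 : (0:ℝ) ≤ N := le_trans (hν0 (Δ 1)) (Finset.le_sup' (fun g : G => ν (Δ g)) (Finset.mem_univ (1 : G)))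
  have hS0 : (0:ℝ) ≤ S := Finset.sum_nonneg fun g _ => hν0 _
  have hMle : ∀ h : H, |χ h| ≤ M := fun h => Finset.le_sup' (fun h : H => |χ h|) (Finset.mem_univ h)
  have hNle : ∀ g : G, ν (Δ g) ≤ N := fun g => Finset.le_sup' (fun g : G => ν (Δ g)) (Finset.mem_univ g)
  have prodnn : ∀ l : List (Matrix (Fin n) (Fin n) ℝ), (0:ℝ) ≤ (l.map ν).prod := by
    intro l
    induction l with
    | nil => simp
    | cons B l ih => simpa using mul_nonneg (hν0 B) ih
  have key : ∀ (A : Matrix (Fin n) (Fin n) ℝ) (l : List (Matrix (Fin n) (Fin n) ℝ)),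
      ν (A * l.prod) ≤ ν A * (l.map ν).prod := by
    intro A l
    induction l generalizing A with
    | nil => simp
    | cons B l ih =>
      calc ν (A * (B :: l).prod) = ν ((A * B) * l.prod) := by
            simp [List.prod_cons, mul_assoc]
        _ ≤ ν (A * B) * (l.map ν).prod := ih (A * B)
        _ ≤ (ν A * ν B) * (l.map ν).prod :=
            mul_le_mul_of_nonneg_right (hνsub A B) (prodnn l)
        _ = ν A * ((B :: l).map ν).prod := by simp [mul_assoc]
  -- per-term bound
  have term_bound : ∀ (h : H) (g : Fin m → G),
      |χ h * (Q ⬝ᵥ ((Δ (((List.ofFn g).reverse.prod)⁻¹) *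
            ((List.ofFn fun i : Fin m =>
              Δ (if (i : ℕ) = 0 then g i * (h : G) else g i)).reverse.prod)).mulVec ρ))| ≤
      M * N * ∏ i : Fin m, ν (Δ (if (i : ℕ) = 0 then g i * (h : G) else g i)) := by
    intro h g
    set A := Δ (((List.ofFn g).reverse.prod)⁻¹)
    set l := (List.ofFn fun i : Fin m =>
              Δ (if (i : ℕ) = 0 then g i * (h : G) else g i)).reverse
    have hl : (l.map ν).prod = ∏ i : Fin m, ν (Δ (if (i : ℕ) = 0 then g i * (h : G) else g i)) := by
      show (List.map ν ((List.ofFn fun i : Fin m =>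
              Δ (if (i : ℕ) = 0 then g i * (h : G) else g i)).reverse)).prod = _
      rw [List.map_reverse, List.prod_reverse, List.map_ofFn, List.prod_ofFn]
      rfl
    have h1 : |Q ⬝ᵥ ((A * l.prod)).mulVec ρ| ≤ ν A * (l.map ν).prod :=
      le_trans (hνQ _) (key A l)
    calc |χ h * (Q ⬝ᵥ (A * l.prod).mulVec ρ)|
        = |χ h| * |Q ⬝ᵥ (A * l.prod).mulVec ρ| := abs_mul _ _
      _ ≤ M * (ν A * (l.map ν).prod) := by
          apply mul_le_mul (hMle h) h1 (abs_nonneg _) hM0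
      _ ≤ M * (N * (l.map ν).prod) := by
          apply mul_le_mul_of_nonneg_left
            (mul_le_mul_of_nonneg_right (hNle _) (prodnn l)) hM0
      _ = M * N * (l.map ν).prod := by ring
      _ = M * N * ∏ i : Fin m, ν (Δ (if (i : ℕ) = 0 then g i * (h : G) else g i)) := by
          rw [hl]
  -- sum over g factorizes
  have gsum : ∀ h : H,
      (∑ g : Fin m → G, ∏ i : Fin m, ν (Δ (if (i : ℕ) = 0 then g i * (h : G) else g i)))
        = S ^ m := by
    intro h
    have := (Finset.prod_univ_sum (fun _ : Fin m => (Finset.univ : Finset G))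
      (fun i x => ν (Δ (if (i : ℕ) = 0 then x * (h : G) else x)))).symm
    rw [Fintype.piFinset_univ] at this
    rw [this]
    have : ∀ i : Fin m, (∑ x : G, ν (Δ (if (i : ℕ) = 0 then x * (h : G) else x))) = S := by
      intro i
      by_cases hi : (i : ℕ) = 0
      · simp only [hi, if_true]
        exact Fintype.sum_equiv (Equiv.mulRight (h : G)) _ _ (fun x => rfl)
      · simp [hi, hSdef]
    rw [Finset.prod_congr rfl fun i _ => this i]
    simp
  have cardH0 : (0:ℝ) < (Fintype.card H : ℝ) := by positivity
  have cardG0 : (0:ℝ) < (Fintype.card G : ℝ) := by positivity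
  have cinv0 : (0:ℝ) ≤ (d : ℝ) * ((Fintype.card H : ℝ) * (Fintype.card G : ℝ) ^ m)⁻¹ := by
    positivity
  calc |(d : ℝ) * ((Fintype.card H : ℝ) * (Fintype.card G : ℝ) ^ m)⁻¹ *
        ∑ h : H, ∑ g : Fin m → G, χ h *
          (Q ⬝ᵥ ((Δ (((List.ofFn g).reverse.prod)⁻¹) *
            ((List.ofFn fun i : Fin m =>
              Δ (if (i : ℕ) = 0 then g i * (h : G) else g i)).reverse.prod)).mulVec ρ))|
      = ((d : ℝ) * ((Fintype.card H : ℝ) * (Fintype.card G : ℝ) ^ m)⁻¹) *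
        |∑ h : H, ∑ g : Fin m → G, χ h *
          (Q ⬝ᵥ ((Δ (((List.ofFn g).reverse.prod)⁻¹) *
            ((List.ofFn fun i : Fin m =>
              Δ (if (i : ℕ) = 0 then g i * (h : G) else g i)).reverse.prod)).mulVec ρ))| := by
        rw [abs_mul, abs_of_nonneg cinv0]
    _ ≤ ((d : ℝ) * ((Fintype.card H : ℝ) * (Fintype.card G : ℝ) ^ m)⁻¹) *
        ((Fintype.card H : ℝ) * (M * N * S ^ m)) := by
        apply mul_le_mul_of_nonneg_left _ cinv0
        calc |∑ h : H, ∑ g : Fin m → G, χ h *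
          (Q ⬝ᵥ ((Δ (((List.ofFn g).reverse.prod)⁻¹) *
            ((List.ofFn fun i : Fin m =>
              Δ (if (i : ℕ) = 0 then g i * (h : G) else g i)).reverse.prod)).mulVec ρ))|
            ≤ ∑ h : H, ∑ g : Fin m → G, |χ h *
          (Q ⬝ᵥ ((Δ (((List.ofFn g).reverse.prod)⁻¹) *
            ((List.ofFn fun i : Fin m =>
              Δ (if (i : ℕ) = 0 then g i * (h : G) else g i)).reverse.prod)).mulVec ρ))| := by
              refine le_trans (Finset.abs_sum_le_sum_abs _ _) ?_
              exact Finset.sum_le_sum fun h _ => Finset.abs_sum_le_sum_abs _ _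
          _ ≤ ∑ h : H, ∑ g : Fin m → G,
              M * N * ∏ i : Fin m, ν (Δ (if (i : ℕ) = 0 then g i * (h : G) else g i)) :=
              Finset.sum_le_sum fun h _ => Finset.sum_le_sum fun g _ => term_bound h g
          _ = ∑ h : H, M * N * S ^ m := by
              refine Finset.sum_congr rfl fun h _ => ?_
              rw [← Finset.mul_sum, gsum h]
          _ = (Fintype.card H : ℝ) * (M * N * S ^ m) := by
              simp [Finset.sum_const, nsmul_eq_mul]
    _ = ((d : ℝ) * M * N) * ((Fintype.card G : ℝ)⁻¹ * S) ^ m := by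
        field_simp
        rw [div_pow, mul_div_assoc', eq_div_iff (pow_ne_zero m (ne_of_gt cardG0))]
        ring
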